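/- Let n ≥ 2, λ ∈ ℝ, and b ∈ ℝⁿ with |b| = 1, and define e(x) = ((1 − |x|²)/|x − b|²)^{(n−1+iλ)/2} for x in the open unit ball of ℝⁿ (complex power of a positive real base). Then for every x with |x| < 1, (1 − |x|²)·[(1 − |x|²)·Σ_{j=1}^n ∂²e/∂x_j²(x) + (2n − 4)·Σ_{j=1}^n x_j·∂e/∂x_j(x)] = −(λ² + (n−1)²)·e(x). -/

import Mathlib

/-- The plane wave `e_{λ,b}(x) = ((1 - |x|²)/|x - b|²)^{(n-1+iλ)/2}` on the unit ball
of `ℝⁿ`. -/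
noncomputable def pwBall (n : ℕ) (lam : ℝ) (b x : EuclideanSpace ℝ (Fin n)) : ℂ :=
  (((1 - ‖x‖ ^ 2) / ‖x - b‖ ^ 2 : ℝ) : ℂ) ^ (((n : ℂ) - 1 + Complex.I * (lam : ℂ)) / 2)

/-- Partial derivative `∂f/∂x_j` of `f : ℝⁿ → ℂ`. -/
noncomputable def pd (n : ℕ) (j : Fin n) (f : EuclideanSpace ℝ (Fin n) → ℂ)
    (x : EuclideanSpace ℝ (Fin n)) : ℂ :=
  deriv (fun s : ℝ => f (x + s • EuclideanSpace.single j (1 : ℝ))) 0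

section aux

open Complex

lemma cpowDeriv' {f : ℝ → ℝ} {f' s : ℝ} (hf : HasDerivAt f f' s) (hpos : 0 < f s) (μ : ℂ) :
    HasDerivAt (fun t : ℝ => ((f t : ℝ) : ℂ) ^ μ) (μ * ((f s : ℝ) : ℂ) ^ (μ - 1) * (f' : ℂ)) s := by
  have h := ((Complex.hasStrictDerivAt_cpow_const (c := μ)
      (Complex.ofReal_mem_slitPlane.2 hpos)).hasDerivAt).comp s hf.ofReal_comp
  simpa [mul_assoc, Function.comp_def] using h

lemma hp1' (u a : ℝ) (s : ℝ) : HasDerivAt (fun s : ℝ => u - 2*a*s - s^2) (-(2*a) - 2*s) s := by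
  have h := ((hasDerivAt_const s u).sub ((hasDerivAt_id s).const_mul (2*a))).sub (hasDerivAt_pow 2 s)
  refine h.congr_deriv ?_
  push_cast; ring

lemma hp2' (v c : ℝ) (s : ℝ) : HasDerivAt (fun s : ℝ => v + 2*c*s + s^2) (2*c + 2*s) s := by
  have h := ((hasDerivAt_const s v).add ((hasDerivAt_id s).const_mul (2*c))).add (hasDerivAt_pow 2 s)
  refine h.congr_deriv ?_
  push_cast; ring

lemma hPq (u v a c : ℝ) {s : ℝ} (h2 : 0 < v + 2*c*s + s^2) :
    HasDerivAt (fun s : ℝ => (u - 2*a*s - s^2) / (v + 2*c*s + s^2))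
      (((-(2*a) - 2*s)*(v + 2*c*s + s^2) - (u - 2*a*s - s^2)*(2*c + 2*s))/(v + 2*c*s + s^2)^2) s :=
  (hp1' u a s).div (hp2' v c s) h2.ne'

lemma hFq (u v a c : ℝ) (μ : ℂ) {s : ℝ} (h1 : 0 < u - 2*a*s - s^2) (h2 : 0 < v + 2*c*s + s^2) :
    HasDerivAt (fun s : ℝ => ((((u - 2*a*s - s^2) / (v + 2*c*s + s^2) : ℝ)) : ℂ) ^ μ)
      (μ * ((((u - 2*a*s - s^2) / (v + 2*c*s + s^2) : ℝ)) : ℂ) ^ (μ - 1) *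
        (((((-(2*a) - 2*s)*(v + 2*c*s + s^2) - (u - 2*a*s - s^2)*(2*c + 2*s))/(v + 2*c*s + s^2)^2
          : ℝ)) : ℂ)) s :=
  cpowDeriv' (hPq u v a c h2) (div_pos h1 h2) μ

lemma core1 (u v a c : ℝ) (μ : ℂ) (hu : 0 < u) (hv : 0 < v) :
    deriv (fun s : ℝ => ((((u - 2*a*s - s^2) / (v + 2*c*s + s^2) : ℝ)) : ℂ) ^ μ) 0
      = μ * (((u/v : ℝ)) : ℂ) ^ (μ - 1) * ((((-2*a*v - 2*c*u)/v^2 : ℝ)) : ℂ) := by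
  have h := (hFq u v a c μ (s := 0) (by simpa using hu) (by simpa using hv)).deriv
  rw [h]
  norm_num
  left; ring

lemma core2 (u v a c : ℝ) (μ : ℂ) (hu : 0 < u) (hv : 0 < v) :
    deriv (deriv (fun s : ℝ => ((((u - 2*a*s - s^2) / (v + 2*c*s + s^2) : ℝ)) : ℂ) ^ μ)) 0
      = μ * (μ-1) * (((u/v : ℝ)) : ℂ) ^ (μ - 2) * ((((-2*a*v - 2*c*u)/v^2 : ℝ)) : ℂ)^2
        + μ * (((u/v : ℝ)) : ℂ) ^ (μ - 1) *
          ((((-2*v^2 - 2*u*v + 8*a*c*v + 8*u*c^2)/v^3 : ℝ)) : ℂ) := by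
  set P : ℝ → ℝ := fun s => (u - 2*a*s - s^2) / (v + 2*c*s + s^2) with hPdef
  set D : ℝ → ℝ := fun s =>
    ((-(2*a) - 2*s)*(v + 2*c*s + s^2) - (u - 2*a*s - s^2)*(2*c + 2*s))/(v + 2*c*s + s^2)^2
    with hDdef
  set G : ℝ → ℂ := fun s => μ * (((P s : ℝ) : ℂ) ^ (μ - 1) * ((D s : ℝ) : ℂ)) with hGdef
  have o1 : IsOpen {s : ℝ | 0 < u - 2*a*s - s^2} :=
    isOpen_lt continuous_const (by fun_prop)
  have o2 : IsOpen {s : ℝ | 0 < v + 2*c*s + s^2} :=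
    isOpen_lt continuous_const (by fun_prop)
  have hopen : IsOpen {s : ℝ | 0 < u - 2*a*s - s^2 ∧ 0 < v + 2*c*s + s^2} := by
    rw [Set.setOf_and]; exact o1.inter o2
  have h0mem : (0:ℝ) ∈ {s : ℝ | 0 < u - 2*a*s - s^2 ∧ 0 < v + 2*c*s + s^2} :=
    ⟨by simpa using hu, by simpa using hv⟩
  have hev : deriv (fun s : ℝ => (((P s : ℝ)) : ℂ) ^ μ) =ᶠ[nhds 0] G := by
    filter_upwards [hopen.mem_nhds h0mem] with s hs
    rw [(hFq u v a c μ hs.1 hs.2).deriv, hGdef, mul_assoc]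
  rw [hev.deriv_eq]
  have h1 : (0:ℝ) < u - 2*a*0 - 0^2 := by simpa using hu
  have h2 : (0:ℝ) < v + 2*c*0 + 0^2 := by simpa using hv
  have hA : HasDerivAt (fun s : ℝ => (((P s : ℝ)) : ℂ) ^ (μ - 1))
      ((μ-1) * ((P 0 : ℝ) : ℂ) ^ (μ - 1 - 1) *
        ((((-(2*a) - 2*0)*(v + 2*c*0 + 0^2) - (u - 2*a*0 - 0^2)*(2*c + 2*0))/(v + 2*c*0 + 0^2)^2
          : ℝ) : ℂ)) 0 :=
    cpowDeriv' (hPq u v a c h2) (div_pos h1 h2) (μ - 1)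
  have hA1 : HasDerivAt (fun s : ℝ => -(2*a) - 2*s) (-2 : ℝ) 0 := by
    exact ((hasDerivAt_const (0:ℝ) (-(2*a))).sub ((hasDerivAt_id (0:ℝ)).const_mul 2)).congr_deriv (by norm_num)
  have hA2 : HasDerivAt (fun s : ℝ => 2*c + 2*s) (2 : ℝ) 0 := by
    exact ((hasDerivAt_const (0:ℝ) (2*c)).add ((hasDerivAt_id (0:ℝ)).const_mul 2)).congr_deriv (by norm_num)
  have hq1 : HasDerivAt (fun s : ℝ =>
      (-(2*a) - 2*s)*(v + 2*c*s + s^2) - (u - 2*a*s - s^2)*(2*c + 2*s))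
      ((-2)*(v + 2*c*0 + 0^2) + (-(2*a) - 2*0)*(2*c + 2*0)
        - ((-(2*a) - 2*0)*(2*c + 2*0) + (u - 2*a*0 - 0^2)*2)) 0 :=
    (hA1.mul (hp2' v c 0)).sub ((hp1' u a 0).mul hA2)
  have hpsq : HasDerivAt (fun s : ℝ => (v + 2*c*s + s^2)^2)
      (2*(v + 2*c*0 + 0^2)^1*(2*c + 2*0)) 0 := by
    exact ((hp2' v c 0).pow 2).congr_deriv (by norm_num)
  have hD : HasDerivAt D
      ((((-2)*(v + 2*c*0 + 0^2) + (-(2*a) - 2*0)*(2*c + 2*0)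
        - ((-(2*a) - 2*0)*(2*c + 2*0) + (u - 2*a*0 - 0^2)*2)) * (v + 2*c*0 + 0^2)^2
        - ((-(2*a) - 2*0)*(v + 2*c*0 + 0^2) - (u - 2*a*0 - 0^2)*(2*c + 2*0))
          * (2*(v + 2*c*0 + 0^2)^1*(2*c + 2*0))) / ((v + 2*c*0 + 0^2)^2)^2) 0 :=
    hq1.div hpsq (pow_ne_zero 2 h2.ne')
  have hG := ((hA.mul hD.ofReal_comp).const_mul μ).deriv
  rw [hGdef] at *
  refine hG.trans ?_
  have hP0 : P 0 = u / v := by rw [hPdef]; norm_num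
  have hD0 : D 0 = (-2*a*v - 2*c*u)/v^2 := by rw [hDdef]; norm_num; ring
  rw [hP0, hD0, show μ - 1 - 1 = μ - 2 from by ring]
  norm_num
  have hvC : (v : ℂ) ≠ 0 := by exact_mod_cast hv.ne'
  field_simp
  ring

lemma lineNormSq {n : ℕ} (y : EuclideanSpace ℝ (Fin n)) (j : Fin n) (s : ℝ) :
    ‖y + s • EuclideanSpace.single j (1:ℝ)‖^2 = ‖y‖^2 + 2*(y j)*s + s^2 := by
  rw [norm_add_sq_real, real_inner_smul_right, norm_smul]
  have h1 : inner ℝ y (EuclideanSpace.single j (1:ℝ)) = y j := by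
    rw [EuclideanSpace.inner_single_right]; simp
  rw [h1]
  simp [EuclideanSpace.norm_single]
  ring

lemma sumlin {n : ℕ} (f g h : Fin n → ℝ) (p q r w : ℝ) :
    ∑ j : Fin n, (p * f j + q * g j + r * h j + w)
      = p * (∑ j, f j) + q * (∑ j, g j) + r * (∑ j, h j) + n * w := by
  simp [Finset.sum_add_distrib, ← Finset.mul_sum, Finset.sum_const, mul_comm]

lemma normsq_eq_sum {n : ℕ} (y : EuclideanSpace ℝ (Fin n)) : ‖y‖^2 = ∑ j, (y j)^2 := by
  rw [EuclideanSpace.norm_eq, Real.sq_sqrt (by positivity)]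
  simp [Real.norm_eq_abs, sq_abs]


lemma comb (a c A B E D : ℂ) :
    a * (a * (A/D + B/D) + c * (E/D)) = (a*(a*(A+B)) + a*(c*E))/D := by ring

set_option maxHeartbeats 1600000 in
lemma finalAlg (u v S T lam : ℝ) (n : ℕ) (W : ℂ)
    (hu : 0 < u) (hv : 0 < v) (hT : 2*T = S - 1 + v) (huS : u = 1 - S) :
    ((u : ℝ) : ℂ) *
      (((u : ℝ) : ℂ) *
        ((((n : ℂ) - 1 + Complex.I * (lam : ℂ)) / 2) * ((((n : ℂ) - 1 + Complex.I * (lam : ℂ)) / 2) - 1)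
            * (W / (((u/v : ℝ)) : ℂ)^2)
            * ((((4*v^2*S + 8*u*v*T + 4*u^2*v)/v^4 : ℝ)) : ℂ)
          + (((n : ℂ) - 1 + Complex.I * (lam : ℂ)) / 2) * (W / (((u/v : ℝ)) : ℂ))
            * ((((n:ℝ)*(-2*v^2 - 2*u*v) + 8*v*T + 8*u*v)/v^3 : ℝ) : ℂ))
        + ((2 * (n : ℝ) - 4 : ℝ) : ℂ) *
          ((((n : ℂ) - 1 + Complex.I * (lam : ℂ)) / 2) * (W / (((u/v : ℝ)) : ℂ))
            * ((((-2*v*S - 2*u*T)/v^2 : ℝ)) : ℂ)))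
      = -(((lam : ℂ)) ^ 2 + ((n : ℂ) - 1) ^ 2) * W := by
  have hvC : (v : ℂ) ≠ 0 := by exact_mod_cast hv.ne'
  have huC : (u : ℂ) ≠ 0 := by exact_mod_cast hu.ne'
  have hTC : (T : ℂ) = ((S : ℂ) - 1 + (v : ℂ))/2 := by
    have : T = (S - 1 + v)/2 := by linarith
    exact_mod_cast this
  have huSC : (u : ℂ) = 1 - (S : ℂ) := by exact_mod_cast huS
  have hD : (4*(u:ℂ)^2*(v:ℂ)^2) ≠ 0 := by
    exact mul_ne_zero (mul_ne_zero (by norm_num) (pow_ne_zero 2 huC)) (pow_ne_zero 2 hvC)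
  rw [show ((lam:ℂ))^2 = -(Complex.I*(lam:ℂ))^2 from by rw [mul_pow, Complex.I_sq]; ring]
  push_cast
  generalize Complex.I * (lam : ℂ) = z
  rw [show ((n:ℂ) - 1 + z) / 2 * (((n:ℂ) - 1 + z) / 2 - 1)
        * (W / ((u:ℂ)/(v:ℂ))^2)
        * ((4*(v:ℂ)^2*(S:ℂ) + 8*(u:ℂ)*(v:ℂ)*(T:ℂ) + 4*(u:ℂ)^2*(v:ℂ))/(v:ℂ)^4)
      = (((n:ℂ) - 1 + z) * ((n:ℂ) - 3 + z) * W
          * (4*(v:ℂ)^2*(S:ℂ) + 8*(u:ℂ)*(v:ℂ)*(T:ℂ) + 4*(u:ℂ)^2*(v:ℂ)))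
        / (4*(u:ℂ)^2*(v:ℂ)^2) from by
      rw [div_pow]; field_simp; ring]
  rw [show ((n:ℂ) - 1 + z) / 2 * (W / ((u:ℂ)/(v:ℂ)))
        * (((n:ℂ)*(-2*(v:ℂ)^2 - 2*(u:ℂ)*(v:ℂ)) + 8*(v:ℂ)*(T:ℂ) + 8*(u:ℂ)*(v:ℂ))/(v:ℂ)^3)
      = (2*(u:ℂ)*(((n:ℂ) - 1 + z) * W
          * ((n:ℂ)*(-2*(v:ℂ)^2 - 2*(u:ℂ)*(v:ℂ)) + 8*(v:ℂ)*(T:ℂ) + 8*(u:ℂ)*(v:ℂ))))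
        / (4*(u:ℂ)^2*(v:ℂ)^2) from by
      field_simp; ring]
  rw [show ((n:ℂ) - 1 + z) / 2 * (W / ((u:ℂ)/(v:ℂ)))
        * ((-2*(v:ℂ)*(S:ℂ) - 2*(u:ℂ)*(T:ℂ))/(v:ℂ)^2)
      = (2*(u:ℂ)*(v:ℂ)*(((n:ℂ) - 1 + z) * W * (-2*(v:ℂ)*(S:ℂ) - 2*(u:ℂ)*(T:ℂ))))
        / (4*(u:ℂ)^2*(v:ℂ)^2) from by
      field_simp; ring]
  rw [comb, div_eq_iff hD, huSC, hTC]
  ring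

end aux

set_option maxHeartbeats 2000000 in
/-- On the real hyperbolic `n`-space realized as the unit ball of `ℝⁿ`,
the plane wave `e(x) = ((1-|x|²)/|x-b|²)^{(n-1+iλ)/2}` satisfies
`(1-|x|²)·[(1-|x|²)·Σ_j ∂²e/∂x_j² + (2n-4)·Σ_j x_j·∂e/∂x_j] = -(λ²+(n-1)²)·e`. -/
theorem stmt18 (n : ℕ) (hn : 2 ≤ n) (lam : ℝ) (b : EuclideanSpace ℝ (Fin n))
    (hb : ‖b‖ = 1) (x : EuclideanSpace ℝ (Fin n)) (hx : ‖x‖ < 1) :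
    ((1 - ‖x‖ ^ 2 : ℝ) : ℂ) *
        (((1 - ‖x‖ ^ 2 : ℝ) : ℂ) *
            (∑ j : Fin n, pd n j (pd n j (pwBall n lam b)) x) +
          ((2 * (n : ℝ) - 4 : ℝ) : ℂ) *
            (∑ j : Fin n, ((x j : ℝ) : ℂ) * pd n j (pwBall n lam b) x))
      = -(((lam : ℂ)) ^ 2 + ((n : ℂ) - 1) ^ 2) * pwBall n lam b x := by
  classical
  set μ : ℂ := ((n : ℂ) - 1 + Complex.I * (lam : ℂ)) / 2 with hμ
  set u : ℝ := 1 - ‖x‖^2 with hudef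
  set v : ℝ := ‖x - b‖^2 with hvdef
  have hu : 0 < u := by
    have h1 : ‖x‖^2 < 1 := by nlinarith [norm_nonneg x]
    rw [hudef]; linarith
  have hxb : x ≠ b := by rintro rfl; rw [hb] at hx; exact lt_irrefl _ hx
  have hv : 0 < v := by
    rw [hvdef]
    exact pow_pos (norm_pos_iff.mpr (sub_ne_zero.2 hxb)) 2
  -- the one-variable restriction of the plane wave along coordinate direction j
  have funeq : ∀ j : Fin n, (fun s : ℝ => pwBall n lam b (x + s • EuclideanSpace.single j (1:ℝ)))
      = fun s : ℝ => ((((u - 2*(x j)*s - s^2) / (v + 2*((x j) - (b j))*s + s^2) : ℝ)) : ℂ) ^ μ := by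
    intro j; funext s
    have h1 : 1 - ‖x + s • EuclideanSpace.single j (1:ℝ)‖^2 = u - 2*(x j)*s - s^2 := by
      rw [lineNormSq, hudef]; ring
    have h2 : ‖x + s • EuclideanSpace.single j (1:ℝ) - b‖^2
        = v + 2*((x j) - (b j))*s + s^2 := by
      rw [add_sub_right_comm, lineNormSq, hvdef]
      simp [PiLp.sub_apply]
    rw [pwBall, h1, h2, hμ]
  have hpd1 : ∀ j : Fin n, pd n j (pwBall n lam b) x
      = μ * (((u/v : ℝ)) : ℂ) ^ (μ - 1)
          * ((((-2*(x j)*v - 2*((x j) - (b j))*u)/v^2 : ℝ)) : ℂ) := by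
    intro j
    rw [pd, funeq j]
    exact core1 u v (x j) ((x j) - (b j)) μ hu hv
  have hpd2 : ∀ j : Fin n, pd n j (pd n j (pwBall n lam b)) x
      = μ * (μ-1) * (((u/v : ℝ)) : ℂ) ^ (μ - 2)
          * ((((-2*(x j)*v - 2*((x j) - (b j))*u)/v^2 : ℝ)) : ℂ)^2
        + μ * (((u/v : ℝ)) : ℂ) ^ (μ - 1) *
          ((((-2*v^2 - 2*u*v + 8*(x j)*((x j) - (b j))*v + 8*u*((x j) - (b j))^2)/v^3 : ℝ)) : ℂ) := by
    intro j
    have key : (fun s : ℝ => pd n j (pwBall n lam b) (x + s • EuclideanSpace.single j (1:ℝ)))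
        = deriv (fun s : ℝ =>
            ((((u - 2*(x j)*s - s^2) / (v + 2*((x j) - (b j))*s + s^2) : ℝ)) : ℂ) ^ μ) := by
      funext s
      rw [pd]
      have harg : (fun t : ℝ => pwBall n lam b
            (x + s • EuclideanSpace.single j (1:ℝ) + t • EuclideanSpace.single j (1:ℝ)))
          = fun t : ℝ =>
            ((((u - 2*(x j)*(s+t) - (s+t)^2) / (v + 2*((x j) - (b j))*(s+t) + (s+t)^2) : ℝ)) : ℂ) ^ μ := by
        funext t
        have : x + s • EuclideanSpace.single j (1:ℝ) + t • EuclideanSpace.single j (1:ℝ)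
            = x + (s + t) • EuclideanSpace.single j (1:ℝ) := by
          rw [add_smul]; abel
        rw [this]
        exact congrFun (funeq j) (s + t)
      rw [harg]
      have := deriv_comp_const_add (fun r : ℝ =>
        ((((u - 2*(x j)*r - r^2) / (v + 2*((x j) - (b j))*r + r^2) : ℝ)) : ℂ) ^ μ) s 0
      simpa using this
    rw [pd, key]
    exact core2 u v (x j) ((x j) - (b j)) μ hu hv
  -- sums
  set S : ℝ := ∑ j : Fin n, (x j)^2 with hSdef
  set T : ℝ := ∑ j : Fin n, (x j)*((x j) - (b j)) with hTdef
  have hS : S = ‖x‖^2 := (normsq_eq_sum x).symm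
  have hVsum : ∑ j : Fin n, ((x j) - (b j))^2 = v := by
    rw [hvdef, normsq_eq_sum]
    exact Finset.sum_congr rfl fun j _ => by simp [PiLp.sub_apply]
  have hbsum : ∑ j : Fin n, (b j)^2 = 1 := by
    have := normsq_eq_sum b
    rw [hb] at this; simpa using this.symm
  have hT : 2*T = S - 1 + v := by
    rw [hTdef, Finset.mul_sum]
    rw [Finset.sum_congr rfl (fun j _ => show 2*((x j)*((x j) - (b j)))
      = (x j)^2 - (b j)^2 + ((x j) - (b j))^2 from by ring)]
    rw [Finset.sum_add_distrib, Finset.sum_sub_distrib, hVsum, hbsum, hSdef]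
  -- real sums
  have rSum1 : ∑ j : Fin n, (x j) * ((-2*(x j)*v - 2*((x j) - (b j))*u)/v^2)
      = (-2*v*S - 2*u*T)/v^2 := by
    rw [Finset.sum_congr rfl (fun j _ => show (x j) * ((-2*(x j)*v - 2*((x j) - (b j))*u)/v^2)
      = (-2/v)*((x j)^2) + (-2*u/v^2)*((x j)*((x j) - (b j)))
        + 0*(((x j) - (b j))^2) + 0 from by field_simp; ring), sumlin, ← hSdef, ← hTdef, hVsum]
    field_simp; ring
  have rSum2a : ∑ j : Fin n, ((-2*(x j)*v - 2*((x j) - (b j))*u)/v^2)^2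
      = (4*v^2*S + 8*u*v*T + 4*u^2*v)/v^4 := by
    rw [Finset.sum_congr rfl (fun j _ => show ((-2*(x j)*v - 2*((x j) - (b j))*u)/v^2)^2
      = (4/v^2)*((x j)^2) + (8*u/v^3)*((x j)*((x j) - (b j)))
        + (4*u^2/v^4)*(((x j) - (b j))^2) + 0 from by field_simp; ring),
      sumlin, ← hSdef, ← hTdef, hVsum]
    field_simp; ring
  have rSum2b : ∑ j : Fin n,
      ((-2*v^2 - 2*u*v + 8*(x j)*((x j) - (b j))*v + 8*u*((x j) - (b j))^2)/v^3)
      = ((n:ℝ)*(-2*v^2 - 2*u*v) + 8*v*T + 8*u*v)/v^3 := by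
    rw [Finset.sum_congr rfl (fun j _ => show
      ((-2*v^2 - 2*u*v + 8*(x j)*((x j) - (b j))*v + 8*u*((x j) - (b j))^2)/v^3)
      = 0*((x j)^2) + (8/v^2)*((x j)*((x j) - (b j)))
        + (8*u/v^3)*(((x j) - (b j))^2) + (-2*v^2 - 2*u*v)/v^3 from by field_simp; ring),
      sumlin, ← hSdef, ← hTdef, hVsum]
    field_simp; ring
  -- complex sums
  have cSum1 : ∑ j : Fin n, ((x j : ℝ) : ℂ) * pd n j (pwBall n lam b) x
      = μ * (((u/v : ℝ)) : ℂ) ^ (μ - 1) * ((((-2*v*S - 2*u*T)/v^2 : ℝ)) : ℂ) := by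
    rw [Finset.sum_congr rfl (fun j _ => by rw [hpd1 j])]
    rw [Finset.sum_congr rfl (fun j _ => show ((x j:ℝ):ℂ) * (μ * (((u/v : ℝ)) : ℂ) ^ (μ - 1)
        * ((((-2*(x j)*v - 2*((x j) - (b j))*u)/v^2 : ℝ)) : ℂ))
      = μ * (((u/v : ℝ)) : ℂ) ^ (μ - 1)
        * ((((x j) * ((-2*(x j)*v - 2*((x j) - (b j))*u)/v^2) : ℝ)) : ℂ) from by
          push_cast; ring),
      ← Finset.mul_sum, ← Complex.ofReal_sum, rSum1]
  have cSum2 : ∑ j : Fin n, pd n j (pd n j (pwBall n lam b)) x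
      = μ * (μ-1) * (((u/v : ℝ)) : ℂ) ^ (μ - 2)
          * ((((4*v^2*S + 8*u*v*T + 4*u^2*v)/v^4 : ℝ)) : ℂ)
        + μ * (((u/v : ℝ)) : ℂ) ^ (μ - 1)
          * ((((n:ℝ)*(-2*v^2 - 2*u*v) + 8*v*T + 8*u*v)/v^3 : ℝ) : ℂ) := by
    rw [Finset.sum_congr rfl (fun j _ => by rw [hpd2 j])]
    rw [Finset.sum_add_distrib]
    congr 1
    · rw [Finset.sum_congr rfl (fun j _ => show μ * (μ-1) * (((u/v : ℝ)) : ℂ) ^ (μ - 2)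
          * ((((-2*(x j)*v - 2*((x j) - (b j))*u)/v^2 : ℝ)) : ℂ)^2
        = μ * (μ-1) * (((u/v : ℝ)) : ℂ) ^ (μ - 2)
          * (((((-2*(x j)*v - 2*((x j) - (b j))*u)/v^2)^2 : ℝ)) : ℂ) from by push_cast; ring),
        ← Finset.mul_sum, ← Complex.ofReal_sum, rSum2a]
    · rw [← Finset.mul_sum, ← Complex.ofReal_sum, rSum2b]
  rw [cSum1, cSum2]
  have hpw : pwBall n lam b x = (((u/v : ℝ)) : ℂ) ^ μ := by
    rw [pwBall, ← hμ, ← hudef, ← hvdef]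
  rw [hpw]
  have hqpos : (0:ℝ) < u/v := div_pos hu hv
  have hqne : (((u/v : ℝ)) : ℂ) ≠ 0 := by exact_mod_cast hqpos.ne'
  have hW1 : (((u/v : ℝ)) : ℂ)^(μ-1) = (((u/v : ℝ)) : ℂ)^μ / (((u/v : ℝ)) : ℂ) := by
    rw [Complex.cpow_sub _ _ hqne, Complex.cpow_one]
  have hW2 : (((u/v : ℝ)) : ℂ)^(μ-2) = (((u/v : ℝ)) : ℂ)^μ / (((u/v : ℝ)) : ℂ)^2 := by
    rw [Complex.cpow_sub _ _ hqne, show (2:ℂ) = ((2:ℕ):ℂ) from by norm_num,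
      Complex.cpow_natCast]
  rw [hW1, hW2, hμ]
  have huS' : u = 1 - S := by rw [hudef, hS]
  linear_combination finalAlg u v S T lam n
    ((((u/v : ℝ)) : ℂ) ^ (((n : ℂ) - 1 + Complex.I * (lam : ℂ)) / 2)) hu hv hT huS'
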